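/- Let Γ = ⟨α, β⟩ with gcd(α, β) = 1 and 3 ≤ α < β, let g = αβ − aα − bβ be a gap of Γ (1 ≤ a ≤ β−1, 1 ≤ b ≤ α−1), and let Δ = Γ ∪ (g + Γ). Then 3δ(Δ) − c(Δ) ≥ 0. -/

import Mathlib

/-- A numerical semigroup: a cofinite additive submonoid of ℕ. -/
def IsNumSgp (S : Set ℕ) : Prop :=
  0 ∈ S ∧ (∀ a ∈ S, ∀ b ∈ S, a + b ∈ S) ∧ Sᶜ.Finite

/-- Conductor: least `n` such that every `x ≥ n` lies in `S` (equals `F(S)+1`, and `0` for `ℕ`). -/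
noncomputable def nsConductor (S : Set ℕ) : ℕ :=
  sInf {n : ℕ | ∀ x, n ≤ x → x ∈ S}

/-- Delta invariant: number of elements of `S` strictly below the nsConductor. -/
noncomputable def nsDelta (S : Set ℕ) : ℕ :=
  {x | x ∈ S ∧ x < nsConductor S}.ncard

/-- Multiplicity: least nonzero element of `S`. -/
noncomputable def mult (S : Set ℕ) : ℕ := sInf (S \ {0})

/-- Apéry set of `S` with respect to `s`: elements `w ∈ S` with `w - s ∉ S`. -/
def apery (S : Set ℕ) (s : ℕ) : Set ℕ :=
  {w | w ∈ S ∧ ∀ v ∈ S, v + s ≠ w}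

/-- The type of `S`: number of maximal elements of `Ap(S, m) \ {0}` for the order
`s ⪯ t ↔ t - s ∈ S`. -/
noncomputable def typ (S : Set ℕ) : ℕ :=
  {w | w ∈ apery S (mult S) ∧ w ≠ 0 ∧
    ∀ w' ∈ apery S (mult S), w' ≠ 0 → (∃ u ∈ S, w + u = w') → w' = w}.ncard

/-- `A` is a minimal system of generators of `S`. -/
def MinGens (S : Set ℕ) (A : Finset ℕ) : Prop :=
  (AddSubmonoid.closure (A : Set ℕ) : Set ℕ) = S ∧
    ∀ B ⊆ A, (AddSubmonoid.closure (B : Set ℕ) : Set ℕ) = S → B = A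

/-- The Γ-semimodule generated by `{0, g}`. -/
def semimod (S : Set ℕ) (g : ℕ) : Set ℕ := S ∪ (fun x => g + x) '' S

lemma aux_res (α β : ℕ) (hα : 0 < α) (hco : Nat.Coprime α β) (n : ℤ) :
    ∃ y : ℤ, 0 ≤ y ∧ y < (α : ℤ) ∧ (α : ℤ) ∣ n - y * β := by
  have hb : ((1 : ℕ) : ℤ) = α * Nat.gcdA α β + β * Nat.gcdB α β := by
    rw [← hco]; exact Nat.gcd_eq_gcd_ab α β
  set u := Nat.gcdA α β
  set v := Nat.gcdB α β
  have hα' : (0 : ℤ) < (α : ℤ) := by exact_mod_cast hα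
  refine ⟨(v * n) % α, Int.emod_nonneg _ (by positivity), Int.emod_lt_of_pos _ hα',
    ⟨n * u + ((v * n) / α) * β, ?_⟩⟩
  have hmod : (v * n) % α = v * n - α * ((v * n) / α) := by
    rw [Int.emod_def]
  rw [hmod]
  push_cast at hb
  linear_combination n * hb

lemma aux_mem (α β : ℕ) (S : Set ℕ)
    (hSdef : S = {n : ℕ | ∃ x y : ℕ, n = x * α + y * β})
    (n : ℕ) (x y : ℤ) (hx : 0 ≤ x) (hy : 0 ≤ y) (h : (n : ℤ) = x * α + y * β) :
    n ∈ S := by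
  subst hSdef
  refine ⟨x.toNat, y.toNat, ?_⟩
  have h2 : ((n : ℤ)) = (x.toNat : ℤ) * α + (y.toNat : ℤ) * β := by
    rw [Int.toNat_of_nonneg hx, Int.toNat_of_nonneg hy]; exact h
  exact_mod_cast h2

lemma aux_gap (α β : ℕ) (hα : 3 ≤ α) (hco : Nat.Coprime α β) (S : Set ℕ)
    (hSdef : S = {n : ℕ | ∃ x y : ℕ, n = x * α + y * β})
    (n i j : ℕ) (hi : 1 ≤ i) (hj : 1 ≤ j)
    (hn : (n : ℤ) = (α : ℤ) * β - i * α - j * β) : n ∉ S := by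
  subst hSdef
  rintro ⟨x, y, rfl⟩
  have heq : (x + i) * α + (y + j) * β = α * β := by
    have : ((x + i) * α + (y + j) * β : ℤ) = ((α : ℤ) * β) := by push_cast at hn ⊢; linarith
    exact_mod_cast this
  have hd1 : α ∣ (x + i) * α := dvd_mul_left α (x + i)
  have hd2 : α ∣ (y + j) * β := by
    have : α ∣ (x + i) * α + (y + j) * β := heq ▸ dvd_mul_right α β
    exact (Nat.dvd_add_right hd1).mp this
  have hd3 : α ∣ (y + j) := Nat.Coprime.dvd_of_dvd_mul_right hco hd2
  have h4 : α ≤ y + j := Nat.le_of_dvd (by omega) hd3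
  have h5 : α * β ≤ (y + j) * β := Nat.mul_le_mul_right β h4
  have h6 : 0 < (x + i) * α := Nat.mul_pos (by omega) (by omega)
  omega

lemma aux_big (α β : ℕ) (hα : 3 ≤ α) (hαβ : α < β) (hco : Nat.Coprime α β) (S : Set ℕ)
    (hSdef : S = {n : ℕ | ∃ x y : ℕ, n = x * α + y * β})
    (n : ℕ) (hn : (α : ℤ) * β - α - β < n) : n ∈ S := by
  obtain ⟨y, hy0, hyα, k, hk⟩ := aux_res α β (by omega) hco n
  have hβ0 : (0:ℤ) ≤ (β:ℤ) := by positivity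
  have h1 : y * β ≤ ((α : ℤ) - 1) * β := mul_le_mul_of_nonneg_right (by linarith) hβ0
  have h2 : -(α : ℤ) < α * k := by linarith
  have hk0 : 0 ≤ k := by
    by_contra h
    push_neg at h
    have : (α : ℤ) * k ≤ α * (-1) := mul_le_mul_of_nonneg_left (by omega) (by positivity)
    linarith
  exact aux_mem α β _ hSdef n k y hk0 hy0 (by linarith)

lemma aux_sym (α β : ℕ) (hα : 3 ≤ α) (hαβ : α < β) (hco : Nat.Coprime α β) (S : Set ℕ)
    (hSdef : S = {n : ℕ | ∃ x y : ℕ, n = x * α + y * β})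
    (n w : ℕ) (hn : n ∉ S) (hw : (w : ℤ) = (α : ℤ) * β - α - β - n) : w ∈ S := by
  obtain ⟨y, hy0, hyα, k, hk⟩ := aux_res α β (by omega) hco n
  have hβ0 : (0:ℤ) ≤ (β:ℤ) := by positivity
  have hk0 : ¬ (0 ≤ k) := by
    intro hk0
    exact hn (aux_mem α β _ hSdef n k y hk0 hy0 (by linarith))
  push_neg at hk0
  refine aux_mem α β _ hSdef w (-k - 1) ((α : ℤ) - 1 - y) (by omega) (by linarith) ?_
  rw [hw]; ring_nf; linarith [hk]

lemma aux_tt (t : ℤ) : 0 ≤ t * (t + 1) := by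
  rcases le_or_gt 0 t with h | h
  · exact mul_nonneg h (by omega)
  · nlinarith

lemma aux_key (A B a b : ℤ) (hA : 3 ≤ A) (hAB : A < B) (ha1 : 1 ≤ a)
    (hb1 : 1 ≤ b) (hsum : a * A + b * B ≤ A * B - 1)
    (hne : a * A ≠ b * B) : 4 * min (a * A) (b * B) ≤ (A - 1) * (B - 1) + 6 * (a * b) := by
  rcases lt_or_gt_of_ne hne with hlt | hgt
  · rw [min_eq_left hlt.le]
    rcases le_or_gt (2 * A) (3 * b) with h3 | h3
    · nlinarith [mul_nonneg (by linarith : (0:ℤ) ≤ a) (by linarith : (0:ℤ) ≤ 3 * b - 2 * A),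
        mul_nonneg (by linarith : (0:ℤ) ≤ A - 1) (by linarith : (0:ℤ) ≤ B - 1)]
    · have h2 : a * A * (2 * A - 3 * b) ≤ (b * B - 1) * (2 * A - 3 * b) :=
        mul_le_mul_of_nonneg_right (by linarith) (by linarith)
      have hE : (0:ℤ) ≤ A ^ 2 - 3 * A + 2 * (A - 3 * b) ^ 2 := by nlinarith [sq_nonneg (A - 3 * b)]
      have hkey : 2 * (b * B - 1) * (2 * A - 3 * b) ≤ A * (A - 1) * (B - 1) := by
        nlinarith [mul_nonneg (by linarith : (0:ℤ) ≤ B - A - 1) hE,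
          mul_nonneg (mul_nonneg (by linarith : (0:ℤ) ≤ A) (by linarith : (0:ℤ) ≤ A - 2)) (by linarith : (0:ℤ) ≤ A - 3),
          mul_nonneg (sq_nonneg (A - 3 * b)) (by linarith : (0:ℤ) ≤ A - 3),
          aux_tt (A - 3 * b), sq_nonneg (A - 3 * b)]
      have final : A * (4 * (a * A)) ≤ A * ((A - 1) * (B - 1) + 6 * (a * b)) := by nlinarith [h2, hkey]
      exact le_of_mul_le_mul_left final (by linarith)
  · rw [min_eq_right hgt.le]
    rcases le_or_gt (2 * B) (3 * a) with h3 | h3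
    · nlinarith [mul_nonneg (by linarith : (0:ℤ) ≤ b) (by linarith : (0:ℤ) ≤ 3 * a - 2 * B),
        mul_nonneg (by linarith : (0:ℤ) ≤ A - 1) (by linarith : (0:ℤ) ≤ B - 1)]
    · have h2 : b * B * (2 * B - 3 * a) ≤ (a * A - 1) * (2 * B - 3 * a) :=
        mul_le_mul_of_nonneg_right (by linarith) (by linarith)
      have hE : (0:ℤ) ≤ B ^ 2 - 3 * B + 2 * (B - 3 * a) ^ 2 := by nlinarith [sq_nonneg (B - 3 * a)]
      have hkey : 2 * (a * A - 1) * (2 * B - 3 * a) ≤ B * (A - 1) * (B - 1) := by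
        nlinarith [mul_nonneg (by linarith : (0:ℤ) ≤ A - 3) hE, aux_tt (B - 3 * a),
          sq_nonneg (B - 3 * a)]
      have final : B * (4 * (b * B)) ≤ B * ((A - 1) * (B - 1) + 6 * (a * b)) := by nlinarith [h2, hkey]
      exact le_of_mul_le_mul_left final (by linarith)

lemma aux_split (s : Finset ℕ) (p : ℕ → Prop) [DecidablePred p]
    [DecidablePred (fun n => ¬ p n)] :
    (s.filter p).card + (s.filter (fun n => ¬ p n)).card = s.card := by
  classical
  rw [Finset.filter_congr_decidable, Finset.filter_congr_decidable]
  exact Finset.card_filter_add_card_filter_not (p := p)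

set_option maxHeartbeats 1600000 in
theorem stmt19 (α β : ℕ) (hα : 3 ≤ α) (hαβ : α < β) (hco : Nat.Coprime α β)
    (S : Set ℕ) (hSdef : S = {n : ℕ | ∃ x y : ℕ, n = x * α + y * β})
    (a b g : ℕ) (ha : 1 ≤ a ∧ a ≤ β - 1) (hb : 1 ≤ b ∧ b ≤ α - 1)
    (hgdef : (g : ℤ) = (α : ℤ) * β - a * α - b * β) (hg : g ∉ S) :
    0 ≤ 3 * (nsDelta (semimod S g) : ℤ) - (nsConductor (semimod S g) : ℤ) := by
  classical
  obtain ⟨ha1, ha2⟩ := ha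
  obtain ⟨hb1, hb2⟩ := hb
  have h0S : (0 : ℕ) ∈ S := by rw [hSdef]; exact ⟨0, 0, by ring⟩
  have hg1 : 1 ≤ g := by
    rcases Nat.eq_zero_or_pos g with h | h
    · exact absurd (h ▸ h0S) hg
    · exact h
  have hab2 : a * α ≠ b * β := by
    intro h
    have hd : β ∣ a * α := ⟨b, by linarith [h]⟩
    have hd2 : β ∣ a := Nat.Coprime.dvd_of_dvd_mul_right hco.symm hd
    have := Nat.le_of_dvd (by omega) hd2
    omega
  have hSsubΔ : S ⊆ semimod S g := Set.subset_union_left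
  have hgΔ : ∀ s ∈ S, g + s ∈ semimod S g := fun s hs => Set.mem_union_right _ ⟨s, hs, rfl⟩
  -- F and m
  have hαβ2 : α + β ≤ α * β := by nlinarith
  set Fn := α * β - α - β with hFndef
  have hFn' : (Fn : ℤ) = (α : ℤ) * β - α - β := by
    rw [hFndef, Nat.sub_sub, Nat.cast_sub hαβ2]; push_cast; ring
  set m := min (a * α) (b * β) with hmdef
  have hmZ : (m : ℤ) = min ((a:ℤ) * α) ((b:ℤ) * β) := by
    rw [hmdef]; push_cast [Nat.cast_min]; ring_nf
  have hsumZ : (a:ℤ) * α + (b:ℤ) * β ≤ (α:ℤ) * β - 1 := by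
    have hgZ : (1:ℤ) ≤ (g:ℤ) := by exact_mod_cast hg1
    linarith [hgdef]
  have hmFn : m ≤ Fn := by
    have h1 : (m : ℤ) ≤ (Fn : ℤ) := by
      rw [hFn']
      have hαZ : (3:ℤ) ≤ (α:ℤ) := by exact_mod_cast hα
      have hβZ : (α:ℤ) < (β:ℤ) := by exact_mod_cast hαβ
      have hneZ : (a:ℤ) * α ≠ (b:ℤ) * β := by
        intro h; exact hab2 (by exact_mod_cast h)
      rcases lt_or_gt_of_ne hneZ with h | h
      · rw [hmZ, min_eq_left h.le]; nlinarith
      · rw [hmZ, min_eq_right h.le]; nlinarith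
    exact_mod_cast h1
  set w := Fn - m with hwdef
  have hwZ : (w : ℤ) = (Fn : ℤ) - (m : ℤ) := by rw [hwdef, Nat.cast_sub hmFn]
  -- w is a gap of the semimodule
  have hwΔ : w ∉ semimod S g := by
    intro hmem
    rcases lt_or_gt_of_ne hab2 with hlt | hgt
    · have hmeq : (m:ℤ) = (a:ℤ) * α := by
        rw [hmdef]; push_cast [Nat.cast_min]
        rw [min_eq_left (by exact_mod_cast hlt.le)]
      rcases hmem with hS | ⟨s, hsS, hsw⟩
      · exact aux_gap α β hα hco S hSdef w (a+1) 1 (by omega) le_rfl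
          (by rw [hwZ, hFn']; push_cast; linarith [hmeq]) hS
      · have hswZ : (g : ℤ) + s = w := by exact_mod_cast congrArg (Nat.cast : ℕ → ℤ) hsw
        have hsZ : (s:ℤ) = (b:ℤ) * β - β - α := by
          rw [hwZ, hFn', hmeq] at hswZ; linarith [hgdef]
        have hb2' : 2 ≤ b := by
          by_contra hcon
          have hb1' : b = 1 := by omega
          rw [hb1'] at hsZ
          have : (0:ℤ) ≤ (s:ℤ) := by positivity
          have hαZ : (3:ℤ) ≤ (α:ℤ) := by exact_mod_cast hα
          push_cast at hsZ
          linarith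
        refine aux_gap α β hα hco S hSdef s 1 (α + 1 - b) le_rfl (by omega) ?_ hsS
        rw [hsZ]
        have : ((α + 1 - b : ℕ) : ℤ) = (α:ℤ) + 1 - b := by
          rw [Nat.cast_sub (by omega)]; push_cast; ring
        rw [this]; ring
    · have hmeq : (m:ℤ) = (b:ℤ) * β := by
        rw [hmdef]; push_cast [Nat.cast_min]
        rw [min_eq_right (by exact_mod_cast hgt.le)]
      rcases hmem with hS | ⟨s, hsS, hsw⟩
      · exact aux_gap α β hα hco S hSdef w 1 (b+1) le_rfl (by omega)
          (by rw [hwZ, hFn']; push_cast; linarith [hmeq]) hS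
      · have hswZ : (g : ℤ) + s = w := by exact_mod_cast congrArg (Nat.cast : ℕ → ℤ) hsw
        have hsZ : (s:ℤ) = (a:ℤ) * α - α - β := by
          rw [hwZ, hFn', hmeq] at hswZ; linarith [hgdef]
        have ha2' : 2 ≤ a := by
          by_contra hcon
          have ha1' : a = 1 := by omega
          rw [ha1'] at hsZ
          have : (0:ℤ) ≤ (s:ℤ) := by positivity
          have hβZ : (3:ℤ) ≤ (β:ℤ) := by exact_mod_cast (by omega : 3 ≤ β)
          push_cast at hsZ
          linarith
        refine aux_gap α β hα hco S hSdef s (β + 1 - a) 1 (by omega) le_rfl ?_ hsS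
        rw [hsZ]
        have : ((β + 1 - a : ℕ) : ℤ) = (β:ℤ) + 1 - a := by
          rw [Nat.cast_sub (by omega)]; push_cast; ring
        rw [this]; ring
  -- conductor bounds
  have hcmem : (Fn + 1) ∈ {n : ℕ | ∀ x, n ≤ x → x ∈ semimod S g} := by
    intro x hx
    refine hSsubΔ (aux_big α β hα hαβ hco S hSdef x ?_)
    have : ((Fn : ℤ) + 1) ≤ (x : ℤ) := by exact_mod_cast hx
    linarith [hFn']
  have hcub : nsConductor (semimod S g) ≤ Fn + 1 := Nat.sInf_le hcmem
  have hclb : w + 1 ≤ nsConductor (semimod S g) := by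
    refine le_csInf ⟨_, hcmem⟩ ?_
    intro n hn
    by_contra hcon
    push_neg at hcon
    exact hwΔ (hn w (by omega))
  -- gap counting
  set Gfin := Finset.filter (fun n => n ∉ S) (Finset.range (Fn + 1)) with hGfin
  have h2G : 2 * Gfin.card ≤ Fn + 1 := by
    have hinj : Gfin.card ≤ (Finset.filter (fun n => n ∈ S) (Finset.range (Fn + 1))).card := by
      apply Finset.card_le_card_of_injOn (fun n => Fn - n)
      · intro n hn
        simp only [hGfin, Finset.mem_coe, Finset.mem_filter, Finset.mem_range] at hn
        simp only [Finset.mem_coe, Finset.mem_filter, Finset.mem_range]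
        have hn1 : n ≤ Fn := by omega
        refine ⟨by omega, aux_sym α β hα hαβ hco S hSdef n (Fn - n) hn.2 ?_⟩
        rw [Nat.cast_sub hn1, hFn']
      · intro x hx y hy hxy
        simp only [hGfin, Finset.mem_coe, Finset.mem_filter, Finset.mem_range] at hx hy
        have h1 : Fn - x = Fn - y := hxy
        have h2 : x < Fn + 1 := hx.1
        have h3 : y < Fn + 1 := hy.1
        omega
    have hsum := aux_split (Finset.range (Fn + 1)) (fun n => n ∈ S)
    simp only [Finset.card_range] at hsum
    have hGfin' : Gfin.card = (Finset.filter (fun n => ¬ n ∈ S) (Finset.range (Fn + 1))).card := rfl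
    omega
  set T := Finset.image (fun p : ℕ × ℕ => g + p.1 * α + p.2 * β)
    (Finset.range a ×ˢ Finset.range b) with hT
  have hcoZ : IsCoprime (α : ℤ) (β : ℤ) := by
    rw [Nat.isCoprime_iff_coprime]; exact hco
  have hTinj : Set.InjOn (fun p : ℕ × ℕ => g + p.1 * α + p.2 * β)
      ↑(Finset.range a ×ˢ Finset.range b) := by
    intro p hp q hq hpq
    simp only [Finset.mem_coe, Finset.mem_product, Finset.mem_range] at hp hq
    have hpq' : g + p.1 * α + p.2 * β = g + q.1 * α + q.2 * β := hpq
    have heq : p.1 * α + p.2 * β = q.1 * α + q.2 * β := by omega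
    have hZ : (p.1 : ℤ) * α + (p.2 : ℤ) * β = (q.1 : ℤ) * α + (q.2 : ℤ) * β := by
      exact_mod_cast heq
    have hd : (α:ℤ) ∣ ((p.2:ℤ) - q.2) * β := ⟨(q.1:ℤ) - p.1, by linarith [hZ]⟩
    obtain ⟨k, hk⟩ := hcoZ.dvd_of_dvd_mul_right hd
    have hαZ : (3:ℤ) ≤ (α:ℤ) := by exact_mod_cast hα
    have hp2b : (p.2 : ℤ) < α := by
      have : (p.2 : ℤ) < b := by exact_mod_cast hp.2
      have : (b : ℤ) + 1 ≤ (α:ℤ) := by exact_mod_cast (by omega : b + 1 ≤ α)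
      linarith
    have hq2b : (q.2 : ℤ) < α := by
      have : (q.2 : ℤ) < b := by exact_mod_cast hq.2
      have : (b : ℤ) + 1 ≤ (α:ℤ) := by exact_mod_cast (by omega : b + 1 ≤ α)
      linarith
    have hp20 : (0:ℤ) ≤ p.2 := by positivity
    have hq20 : (0:ℤ) ≤ q.2 := by positivity
    have hk0 : k = 0 := by
      by_contra hk0
      rcases lt_or_gt_of_ne hk0 with h | h
      · have : (α:ℤ) * k ≤ α * (-1) := mul_le_mul_of_nonneg_left (by omega) (by positivity)
        linarith
      · have : (α:ℤ) * 1 ≤ α * k := mul_le_mul_of_nonneg_left (by omega) (by positivity)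
        linarith
    have hp2q2 : p.2 = q.2 := by
      have : (p.2 : ℤ) = q.2 := by rw [hk0] at hk; linarith
      exact_mod_cast this
    have hp1q1 : p.1 = q.1 := by
      rw [hp2q2] at heq
      have h5 : p.1 * α = q.1 * α := Nat.add_right_cancel heq
      exact Nat.eq_of_mul_eq_mul_right (by omega) h5
    exact Prod.ext hp1q1 hp2q2
  have hTcard : T.card = a * b := by
    rw [hT, Finset.card_image_of_injOn hTinj, Finset.card_product, Finset.card_range,
      Finset.card_range]
  have hTsub : T ⊆ Gfin := by
    intro n hn
    simp only [hT, Finset.mem_image, Finset.mem_product, Finset.mem_range] at hn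
    obtain ⟨p, ⟨hp1, hp2⟩, rfl⟩ := hn
    have hca : ((a - p.1 : ℕ) : ℤ) = (a:ℤ) - p.1 := by
      rw [Nat.cast_sub hp1.le]
    have hcb : ((b - p.2 : ℕ) : ℤ) = (b:ℤ) - p.2 := by
      rw [Nat.cast_sub hp2.le]
    have hnZ : ((g + p.1 * α + p.2 * β : ℕ) : ℤ)
        = (α:ℤ) * β - ((a - p.1 : ℕ) : ℤ) * α - ((b - p.2 : ℕ) : ℤ) * β := by
      rw [hca, hcb]; push_cast; linarith [hgdef]
    simp only [hGfin, Finset.mem_filter, Finset.mem_range]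
    constructor
    · have h1 : (1:ℤ) ≤ ((a - p.1 : ℕ) : ℤ) := by exact_mod_cast (by omega : 1 ≤ a - p.1)
      have h2 : (1:ℤ) ≤ ((b - p.2 : ℕ) : ℤ) := by exact_mod_cast (by omega : 1 ≤ b - p.2)
      have hα0 : (0:ℤ) ≤ (α:ℤ) := by positivity
      have hβ0 : (0:ℤ) ≤ (β:ℤ) := by positivity
      have h3 : (α:ℤ) ≤ ((a - p.1 : ℕ) : ℤ) * α := by nlinarith
      have h4 : (β:ℤ) ≤ ((b - p.2 : ℕ) : ℤ) * β := by nlinarith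
      have h5 : ((g + p.1 * α + p.2 * β : ℕ) : ℤ) ≤ (Fn : ℤ) := by
        rw [hnZ, hFn']; linarith
      have h6 : g + p.1 * α + p.2 * β ≤ Fn := by exact_mod_cast h5
      omega
    · exact aux_gap α β hα hco S hSdef _ (a - p.1) (b - p.2) (by omega) (by omega) hnZ
  set GΔ := Finset.filter (fun n => n ∉ semimod S g) Gfin with hGΔ
  have hdisj : Disjoint T GΔ := by
    rw [Finset.disjoint_left]
    intro n hnT hnG
    simp only [hGΔ, Finset.mem_filter] at hnG
    apply hnG.2
    simp only [hT, Finset.mem_image, Finset.mem_product, Finset.mem_range] at hnT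
    obtain ⟨p, hp, rfl⟩ := hnT
    have hmem : p.1 * α + p.2 * β ∈ S := by rw [hSdef]; exact ⟨p.1, p.2, rfl⟩
    have := hgΔ _ hmem
    convert this using 1
    ring
  have hG2 : a * b + GΔ.card ≤ Gfin.card := by
    have h1 : (T ∪ GΔ).card = a * b + GΔ.card := by
      rw [Finset.card_union_of_disjoint hdisj, hTcard]
    have h2 : T ∪ GΔ ⊆ Gfin := Finset.union_subset hTsub (Finset.filter_subset _ _)
    calc a * b + GΔ.card = (T ∪ GΔ).card := h1.symm
      _ ≤ Gfin.card := Finset.card_le_card h2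
  -- delta
  set c := nsConductor (semimod S g) with hc
  set Dfin := Finset.filter (fun n => n ∈ semimod S g) (Finset.range c) with hDfin
  have hδeq : nsDelta (semimod S g) = Dfin.card := by
    rw [nsDelta, show {x | x ∈ semimod S g ∧ x < nsConductor (semimod S g)} = (Dfin : Set ℕ) by
      ext x
      simp only [hDfin, Finset.coe_filter, Finset.mem_range, Set.mem_setOf_eq, ← hc]
      tauto]
    exact Set.ncard_coe_finset _
  have hδlb : c ≤ Dfin.card + GΔ.card := by
    have hsub2 : Finset.range c ⊆ Dfin ∪ GΔ := by
      intro x hx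
      simp only [Finset.mem_range] at hx
      by_cases hxΔ : x ∈ semimod S g
      · refine Finset.mem_union_left _ ?_
        simp only [hDfin, Finset.mem_filter, Finset.mem_range]
        exact ⟨hx, hxΔ⟩
      · refine Finset.mem_union_right _ ?_
        simp only [hGΔ, hGfin, Finset.mem_filter, Finset.mem_range]
        exact ⟨⟨by omega, fun hxS => hxΔ (hSsubΔ hxS)⟩, hxΔ⟩
    calc c = (Finset.range c).card := (Finset.card_range c).symm
      _ ≤ (Dfin ∪ GΔ).card := Finset.card_le_card hsub2
      _ ≤ Dfin.card + GΔ.card := Finset.card_union_le _ _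
  -- key inequality
  have hαZ : (3:ℤ) ≤ (α:ℤ) := by exact_mod_cast hα
  have hβZ : (α:ℤ) < (β:ℤ) := by exact_mod_cast hαβ
  have hneZ : (a:ℤ) * α ≠ (b:ℤ) * β := by
    intro h; exact hab2 (by exact_mod_cast h)
  have hkey := aux_key (α:ℤ) (β:ℤ) (a:ℤ) (b:ℤ) hαZ hβZ
    (by exact_mod_cast ha1) (by exact_mod_cast hb1) hsumZ hneZ
  have hFn1 : ((α:ℤ) - 1) * ((β:ℤ) - 1) = (Fn:ℤ) + 1 := by rw [hFn']; ring
  have hkey2 : 4 * (m:ℤ) ≤ (Fn:ℤ) + 1 + 6 * ((a:ℤ) * b) := by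
    rw [hmZ]; linarith [hkey, hFn1]
  -- final assembly
  rw [hδeq]
  have z1 : (c:ℤ) ≤ (Dfin.card : ℤ) + (GΔ.card : ℤ) := by exact_mod_cast hδlb
  have z2 : (Fn:ℤ) - m + 1 ≤ (c:ℤ) := by
    have : (w:ℤ) + 1 ≤ (c:ℤ) := by exact_mod_cast hclb
    linarith [hwZ]
  have z3 : (a:ℤ) * b + (GΔ.card : ℤ) ≤ (Gfin.card : ℤ) := by exact_mod_cast hG2
  have z4 : 2 * (Gfin.card : ℤ) ≤ (Fn:ℤ) + 1 := by exact_mod_cast h2G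
  linarith
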